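/- Let S⁻, S⁺ : Matrix 𝒮 ℛ ℝ have nonnegative entries, set 𝕊 = S⁺ − S⁻, and let M ⊆ 𝒮. Then the following are equivalent: (a) there exists a positive flow v : ℛ → ℝ such that for every m ∈ M both (S⁻.mulVec v) m > 0 and (𝕊.mulVec v) m > 0 (i.e., the composite reaction has the form F + mM → nM + W with 0 ≪ m ≪ n on M); (b) there exists a positive flow v : ℛ → ℝ with (𝕊.mulVec v) m > 0 for all m ∈ M, and for every m ∈ M the m-th row of S⁻ is semi-positive (i.e., nonzero). -/
import Mathlib


open Matrix

/-- A real vector is positive if all of its entries are strictly positive. -/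
def Positive {ι : Type*} (v : ι → ℝ) : Prop := ∀ i, 0 < v i

/-- A real vector is semi-positive if all of its entries are nonnegative
and the vector is nonzero. -/
def SemiPositive {ι : Type*} (v : ι → ℝ) : Prop := (∀ i, 0 ≤ v i) ∧ v ≠ 0

/-- Theorem: linear-algebraic characterization of formal autocatalysis in
the species subset `M`: there is a positive flow under which every species
of `M` is both consumed and strictly net produced iff there is a positive
flow strictly net producing every species of `M` and every `M`-row of the
input matrix is semi-positive. -/
theorem formallyAutocatalytic_iff {𝒮 ℛ : Type*}
    [Fintype 𝒮] [Fintype ℛ] [Nonempty 𝒮] [Nonempty ℛ]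
    (Sm Sp : Matrix 𝒮 ℛ ℝ)
    (hSm : ∀ i r, 0 ≤ Sm i r) (hSp : ∀ i r, 0 ≤ Sp i r)
    (M : Set 𝒮) :
    (∃ v : ℛ → ℝ, Positive v ∧
        ∀ m ∈ M, 0 < Sm.mulVec v m ∧ 0 < (Sp - Sm).mulVec v m) ↔
    ((∃ v : ℛ → ℝ, Positive v ∧ ∀ m ∈ M, 0 < (Sp - Sm).mulVec v m) ∧
      ∀ m ∈ M, SemiPositive (fun r => Sm m r)) := by
  constructor
  · rintro ⟨v, hv, h⟩
    refine ⟨⟨v, hv, fun m hm => (h m hm).2⟩, fun m hm => ⟨fun r => hSm m r, ?_⟩⟩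
    intro hrow
    have h0 : Sm.mulVec v m = 0 := by
      simp only [mulVec, dotProduct]
      refine Finset.sum_eq_zero fun r _ => ?_
      have : Sm m r = 0 := congrFun hrow r
      simp [this]
    exact absurd h0 (ne_of_gt (h m hm).1)
  · rintro ⟨⟨v, hv, h⟩, hrows⟩
    refine ⟨v, hv, fun m hm => ⟨?_, h m hm⟩⟩
    obtain ⟨hnn, hne⟩ := hrows m hm
    obtain ⟨r, hr⟩ : ∃ r, Sm m r ≠ 0 := by
      by_contra hc
      push_neg at hc
      exact hne (funext hc)
    simp only [mulVec, dotProduct]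
    exact Finset.sum_pos' (fun i _ => mul_nonneg (hnn i) (hv i).le)
      ⟨r, Finset.mem_univ r, mul_pos ((hnn r).lt_of_ne (Ne.symm hr)) (hv r)⟩
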